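/- Let x, a, b be real numbers with 0 ≤ x ≤ a < b and a > 0, and let k : [a, b] → ℝ be continuously differentiable. Then there exists ξ ∈ [a, b] such that ∫_a^b r·k(r)/√(r² − x²) dr − k(a)·(√(b² − x²) − √(a² − x²)) = k′(ξ) · ∫_a^b r(r − a)/√(r² − x²) dr. -/

import Mathlib

open MeasureTheory intervalIntegral

private lemma abel_sqrt_lower (x a : ℝ) (hx : 0 ≤ x) (hxa : x ≤ a) (ha : 0 < a)
    {s : ℝ} (hs : a ≤ s) :
    Real.sqrt a * Real.sqrt (s - a) ≤ Real.sqrt (s ^ 2 - x ^ 2) := by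
  rw [← Real.sqrt_mul ha.le]
  apply Real.sqrt_le_sqrt
  nlinarith

private lemma abel_integrable (x a b : ℝ) (hx : 0 ≤ x) (hxa : x ≤ a) (hab : a < b)
    (ha : 0 < a) (g : ℝ → ℝ) (hg : ContinuousOn g (Set.Icc a b)) :
    IntervalIntegrable (fun s => g s / Real.sqrt (s ^ 2 - x ^ 2)) volume a b := by
  obtain ⟨C', hC'⟩ : ∃ C', ∀ s ∈ Set.Icc a b, |g s| ≤ C' := by
    obtain ⟨C', h⟩ := (isCompact_Icc.image_of_continuousOn hg.abs).bddAbove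
    exact ⟨C', fun s hs => h (Set.mem_image_of_mem _ hs)⟩
  have hC'0 : 0 ≤ C' := le_trans (abs_nonneg _) (hC' a ⟨le_refl a, hab.le⟩)
  -- the dominating function
  have hBint : IntervalIntegrable
      (fun s => (C' / Real.sqrt a) * (s - a) ^ (-(1/2) : ℝ)) volume a b := by
    have h0 : IntervalIntegrable (fun t : ℝ => t ^ (-(1/2) : ℝ)) volume 0 (b - a) :=
      intervalIntegral.intervalIntegrable_rpow' (by norm_num)
    have := (h0.comp_sub_right a).const_mul (C' / Real.sqrt a)
    simpa using this
  rw [intervalIntegrable_iff_integrableOn_Ioc_of_le hab.le] at hBint ⊢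
  refine MeasureTheory.Integrable.mono hBint ?_ ?_
  · apply ContinuousOn.aestronglyMeasurable _ measurableSet_Ioc
    apply ContinuousOn.div
    · exact hg.mono (Set.Ioc_subset_Icc_self)
    · exact (Real.continuous_sqrt.comp (by continuity)).continuousOn
    · intro s hs
      refine (Real.sqrt_pos.2 ?_).ne'
      nlinarith [hs.1, hs.2, hxa, hx, ha]
  · rw [ae_restrict_iff' measurableSet_Ioc]
    filter_upwards with s hs
    have hsa : 0 < s - a := sub_pos.2 hs.1
    have hrw : (s - a) ^ (-(1/2) : ℝ) = (Real.sqrt (s - a))⁻¹ := by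
      rw [Real.rpow_neg hsa.le, Real.sqrt_eq_rpow]
    have hden : 0 < Real.sqrt a * Real.sqrt (s - a) :=
      mul_pos (Real.sqrt_pos.2 ha) (Real.sqrt_pos.2 hsa)
    have hle : Real.sqrt a * Real.sqrt (s - a) ≤ Real.sqrt (s ^ 2 - x ^ 2) :=
      abel_sqrt_lower x a hx hxa ha hs.1.le
    have h1 : |g s| / Real.sqrt (s ^ 2 - x ^ 2)
        ≤ C' / (Real.sqrt a * Real.sqrt (s - a)) :=
      div_le_div₀ hC'0 (hC' s ⟨hs.1.le, hs.2⟩) hden hle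
    have h2 : C' / (Real.sqrt a * Real.sqrt (s - a))
        = (C' / Real.sqrt a) * (s - a) ^ (-(1/2) : ℝ) := by
      rw [hrw]; field_simp
    rw [Real.norm_eq_abs, Real.norm_eq_abs, abs_div,
      abs_of_nonneg (Real.sqrt_nonneg _)]
    calc |g s| / Real.sqrt (s ^ 2 - x ^ 2)
        ≤ (C' / Real.sqrt a) * (s - a) ^ (-(1/2) : ℝ) := by rw [← h2]; exact h1
      _ ≤ |(C' / Real.sqrt a) * (s - a) ^ (-(1/2) : ℝ)| := le_abs_self _

theorem abel_quadrature_error_mean_value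
    (x a b : ℝ) (hx : 0 ≤ x) (hxa : x ≤ a) (hab : a < b) (ha : 0 < a)
    (k k' : ℝ → ℝ)
    (hderiv : ∀ t ∈ Set.Icc a b, HasDerivAt k (k' t) t)
    (hcont : ContinuousOn k' (Set.Icc a b)) :
    ∃ ξ ∈ Set.Icc a b,
      (∫ s in a..b, s * k s / Real.sqrt (s ^ 2 - x ^ 2))
          - k a * (Real.sqrt (b ^ 2 - x ^ 2) - Real.sqrt (a ^ 2 - x ^ 2))
        = k' ξ * ∫ s in a..b, s * (s - a) / Real.sqrt (s ^ 2 - x ^ 2) := by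
  set D : ℝ → ℝ := fun s => Real.sqrt (s ^ 2 - x ^ 2) with hD
  have hDpos : ∀ s, a < s → 0 < D s := fun s hs =>
    Real.sqrt_pos.2 (by nlinarith)
  have hDnn : ∀ s, 0 ≤ D s := fun s => Real.sqrt_nonneg _
  have contk : ContinuousOn k (Set.Icc a b) :=
    fun t ht => (hderiv t ht).continuousAt.continuousWithinAt
  -- integrability facts
  have hI1 : IntervalIntegrable (fun s => s * k s / D s) volume a b :=
    abel_integrable x a b hx hxa hab ha _ (continuousOn_id.mul contk)
  have hI2 : IntervalIntegrable (fun s => s / D s) volume a b :=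
    abel_integrable x a b hx hxa hab ha _ continuousOn_id
  have hI3 : IntervalIntegrable (fun s => s * (s - a) / D s) volume a b :=
    abel_integrable x a b hx hxa hab ha _ (by fun_prop)
  have hI4 : IntervalIntegrable (fun s => s * (k s - k a) / D s) volume a b :=
    abel_integrable x a b hx hxa hab ha _
      (continuousOn_id.mul (contk.sub continuousOn_const))
  -- FTC for s / D s
  have hFTC : (∫ s in a..b, s / D s) = D b - D a := by
    apply intervalIntegral.integral_eq_sub_of_hasDeriv_right_of_le hab.le
    · exact (Real.continuous_sqrt.comp (by continuity)).continuousOn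
    · intro s hs
      have hne : s ^ 2 - x ^ 2 ≠ 0 := by nlinarith [hs.1, hs.2]
      have h1 : HasDerivAt (fun s : ℝ => s ^ 2 - x ^ 2) (2 * s) s := by
        simpa using (hasDerivAt_pow 2 s).sub_const (x ^ 2)
      have h2 := (Real.hasDerivAt_sqrt hne).comp s h1
      have hD0 : D s ≠ 0 := (hDpos s hs.1).ne'
      have : HasDerivAt D (s / D s) s := by
        refine h2.congr_deriv ?_
        rw [hD]; field_simp
      exact this.hasDerivWithinAt
    · exact hI2
  -- rewrite the error as a single integral
  have hE : (∫ s in a..b, s * k s / D s) - k a * (D b - D a)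
      = ∫ s in a..b, s * (k s - k a) / D s := by
    rw [← hFTC, ← intervalIntegral.integral_const_mul,
      ← intervalIntegral.integral_sub hI1 (hI2.const_mul (k a))]
    apply intervalIntegral.integral_congr
    intro s _
    simp only
    rw [show k a * (s / D s) = (k a * s) / D s from (mul_div_assoc _ _ _).symm, ← sub_div]
    ring_nf
  -- min and max of k'
  obtain ⟨p, hp, hmin⟩ := isCompact_Icc.exists_isMinOn ⟨a, le_refl a, hab.le⟩ hcont
  obtain ⟨q, hq, hmax⟩ := isCompact_Icc.exists_isMaxOn ⟨a, le_refl a, hab.le⟩ hcont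
  -- pointwise bounds
  have hbound : ∀ s ∈ Set.Icc a b,
      (k' p * (s * (s - a) / D s) ≤ s * (k s - k a) / D s ∧
       s * (k s - k a) / D s ≤ k' q * (s * (s - a) / D s)) := by
    intro s hs
    rcases eq_or_lt_of_le hs.1 with h | h
    · simp [← h]
    · obtain ⟨θ, hθ, hslope⟩ := exists_hasDerivAt_eq_slope k k' h
        (contk.mono (Set.Icc_subset_Icc le_rfl hs.2))
        (fun t ht => hderiv t ⟨ht.1.le, ht.2.le.trans hs.2⟩)
      have hθab : θ ∈ Set.Icc a b := ⟨hθ.1.le, hθ.2.le.trans hs.2⟩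
      have hsa : 0 < s - a := sub_pos.2 h
      have hlow : k' p * (s - a) ≤ k s - k a := by
        have h1 : k' p ≤ (k s - k a) / (s - a) := by rw [← hslope]; exact hmin hθab
        exact (le_div_iff₀ hsa).1 h1
      have hhigh : k s - k a ≤ k' q * (s - a) := by
        have h1 : (k s - k a) / (s - a) ≤ k' q := by rw [← hslope]; exact hmax hθab
        exact (div_le_iff₀ hsa).1 h1
      have hpos : 0 ≤ s / D s := div_nonneg (by linarith) (hDnn s)
      constructor
      · calc k' p * (s * (s - a) / D s) = (k' p * (s - a)) * (s / D s) := by ring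
          _ ≤ (k s - k a) * (s / D s) := mul_le_mul_of_nonneg_right hlow hpos
          _ = s * (k s - k a) / D s := by ring
      · calc s * (k s - k a) / D s = (k s - k a) * (s / D s) := by ring
          _ ≤ (k' q * (s - a)) * (s / D s) := mul_le_mul_of_nonneg_right hhigh hpos
          _ = k' q * (s * (s - a) / D s) := by ring
  -- integrate the bounds
  set W : ℝ := ∫ s in a..b, s * (s - a) / D s with hW
  set E : ℝ := ∫ s in a..b, s * (k s - k a) / D s with hEdef
  have hWpos : 0 < W :=
    intervalIntegral.intervalIntegral_pos_of_pos_on hI3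
      (fun s hs => div_pos (mul_pos (ha.trans hs.1) (sub_pos.2 hs.1)) (hDpos s hs.1)) hab
  have hlowint : k' p * W ≤ E := by
    rw [hW, ← intervalIntegral.integral_const_mul]
    exact intervalIntegral.integral_mono_on hab.le (hI3.const_mul _) hI4
      (fun s hs => (hbound s hs).1)
  have hhighint : E ≤ k' q * W := by
    rw [hW, ← intervalIntegral.integral_const_mul]
    exact intervalIntegral.integral_mono_on hab.le hI4 (hI3.const_mul _)
      (fun s hs => (hbound s hs).2)
  -- intermediate value theorem
  have hpq : k' p ≤ k' q := hmin hq
  have hmem : E / W ∈ Set.uIcc (k' p) (k' q) := by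
    rw [Set.uIcc_of_le hpq]
    exact ⟨(le_div_iff₀ hWpos).2 hlowint, (div_le_iff₀ hWpos).2 hhighint⟩
  obtain ⟨ξ, hξ, hξeq⟩ := intermediate_value_uIcc
    (hcont.mono (Set.ordConnected_Icc.uIcc_subset hp hq)) hmem
  refine ⟨ξ, Set.ordConnected_Icc.uIcc_subset hp hq hξ, ?_⟩
  rw [hE, hξeq, div_mul_cancel₀ _ hWpos.ne']
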